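/- arXiv:2310.11653 — 2 statements merged into one kernel-verified Lean document; each statement's English description precedes it below -/
import Mathlib

section
/- Let X and P be linear operators on a complex inner product space with [X,P] = iℏ·𝟙 (ℏ > 0), and let ρ be a state (density operator) with expectation ⟨A⟩ = Tr(Aρ). If |⟨g_l [X,P] g_r⟩| ≤ ε |⟨g_l XP g_r⟩| for the relevant monomials g_l, g_r, then for all integers 1 ≤ l ≤ J: |⟨X^{I₁}P^{J₁}⋯X^{I−1} P^l X P^{J−l}⟩| ≤ (1+ε)^l |⟨X^{I₁}P^{J₁}⋯X^{I}P^{J}⟩|. -/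
/-- The monomial `X^{I₁} P^{J₁} ⋯ X^{I_n} P^{J_n}` determined by a list of exponent pairs. -/
def word {A : Type*} [Ring A] (X P : A) (L : List (ℕ × ℕ)) : A :=
  (L.map (fun e => X ^ e.1 * P ^ e.2)).prod

/-- Induction inequality (induc0) in Proposition 1: under the commutator bound (condition (B))
for all monomials, one has
`|⟨M · X^{I-1} P^l X P^{J-l}⟩| ≤ (1+ε)^l |⟨M · X^I P^J⟩|` for `1 ≤ l ≤ J`. -/
theorem moved_X_through_powers_bound
    {A : Type*} [Ring A] [Algebra ℂ A]
    (X P : A) (ℏ : ℝ) (hℏ : 0 < ℏ)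
    (hcomm : X * P - P * X = algebraMap ℂ A (Complex.I * ℏ))
    (φ : A →ₗ[ℂ] ℂ) (ε : ℝ) (hε : 0 < ε)
    (hB : ∀ L₁ L₂ : List (ℕ × ℕ),
      ‖φ (word X P L₁ * (X * P - P * X) * word X P L₂)‖ ≤
        ε * ‖φ (word X P L₁ * (X * P) * word X P L₂)‖)
    (M : List (ℕ × ℕ)) (I J l : ℕ) (hI : 1 ≤ I) (hl1 : 1 ≤ l) (hlJ : l ≤ J) :
    ‖φ (word X P M * (X ^ (I - 1) * P ^ l * X * P ^ (J - l)))‖ ≤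
      (1 + ε) ^ l * ‖φ (word X P M * (X ^ I * P ^ J))‖ := by
  clear hl1
  induction l with
  | zero =>
      have hX : X ^ (I - 1) * X = X ^ I := by
        rw [← pow_succ, Nat.sub_add_cancel hI]
      simp only [pow_zero, mul_one, Nat.sub_zero, one_mul]
      rw [hX]
  | succ k ih =>
      have hk : k ≤ J := Nat.le_of_succ_le hlJ
      have ih' := ih hk
      set W := word X P M with hW
      -- key specialization of hB
      have hB' := hB (M ++ [(I - 1, k)]) [(0, J - k - 1)]
      have hw1 : word X P (M ++ [(I - 1, k)]) = W * (X ^ (I - 1) * P ^ k) := by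
        simp [word, hW, List.map_append]
      have hw2 : word X P [(0, J - k - 1)] = P ^ (J - k - 1) := by
        simp [word]
      rw [hw1, hw2] at hB'
      -- algebraic identities
      have e1 : X ^ (I - 1) * P ^ (k + 1) * X * P ^ (J - (k + 1)) =
          X ^ (I - 1) * P ^ k * (X * P) * P ^ (J - k - 1) -
          X ^ (I - 1) * P ^ k * (X * P - P * X) * P ^ (J - k - 1) := by
        have : J - (k + 1) = J - k - 1 := by omega
        rw [this, pow_succ]
        noncomm_ring
      have e2 : X ^ (I - 1) * P ^ k * X * P ^ (J - k) =
          X ^ (I - 1) * P ^ k * (X * P) * P ^ (J - k - 1) := by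
        have h : J - k = (J - k - 1) + 1 := by omega
        conv_lhs => rw [h, pow_succ']
        simp only [mul_assoc]
      have key : ‖φ (W * (X ^ (I - 1) * P ^ (k + 1) * X * P ^ (J - (k + 1))))‖ ≤
          (1 + ε) * ‖φ (W * (X ^ (I - 1) * P ^ k * X * P ^ (J - k)))‖ := by
        rw [e1, e2, mul_sub, map_sub]
        calc ‖φ (W * (X ^ (I - 1) * P ^ k * (X * P) * P ^ (J - k - 1))) -
              φ (W * (X ^ (I - 1) * P ^ k * (X * P - P * X) * P ^ (J - k - 1)))‖
            ≤ ‖φ (W * (X ^ (I - 1) * P ^ k * (X * P) * P ^ (J - k - 1)))‖ +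
              ‖φ (W * (X ^ (I - 1) * P ^ k * (X * P - P * X) * P ^ (J - k - 1)))‖ :=
              norm_sub_le _ _
          _ ≤ ‖φ (W * (X ^ (I - 1) * P ^ k * (X * P) * P ^ (J - k - 1)))‖ +
              ε * ‖φ (W * (X ^ (I - 1) * P ^ k * (X * P) * P ^ (J - k - 1)))‖ := by
              have h1 : W * (X ^ (I - 1) * P ^ k) * (X * P - P * X) * P ^ (J - k - 1) =
                  W * (X ^ (I - 1) * P ^ k * (X * P - P * X) * P ^ (J - k - 1)) := by
                noncomm_ring
              have h2 : W * (X ^ (I - 1) * P ^ k) * (X * P) * P ^ (J - k - 1) =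
                  W * (X ^ (I - 1) * P ^ k * (X * P) * P ^ (J - k - 1)) := by
                noncomm_ring
              rw [h1, h2] at hB'
              linarith
          _ = (1 + ε) * ‖φ (W * (X ^ (I - 1) * P ^ k * (X * P) * P ^ (J - k - 1)))‖ := by
              ring
      calc ‖φ (W * (X ^ (I - 1) * P ^ (k + 1) * X * P ^ (J - (k + 1))))‖
          ≤ (1 + ε) * ‖φ (W * (X ^ (I - 1) * P ^ k * X * P ^ (J - k)))‖ := key
        _ ≤ (1 + ε) * ((1 + ε) ^ k * ‖φ (W * (X ^ I * P ^ J))‖) := by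
            have hpos : (0:ℝ) ≤ 1 + ε := by linarith
            exact mul_le_mul_of_nonneg_left ih' hpos
        _ = (1 + ε) ^ (k + 1) * ‖φ (W * (X ^ I * P ^ J))‖ := by ring
end

section
/- With g_{n,m} as above, the recursion g_{n,m}(q,p) = p^n q^m − n(iℏ/2) g_{n−1,m−1}(q,p) holds for all n, m ≥ 1. -/
/-- The closed-form Weyl transform `g_{n,m}(q,p)` of `P^n X^m` (Eq. (g1)). -/
noncomputable def gW (ℏ q p : ℝ) (n m : ℕ) : ℂ :=
  ∑ j ∈ Finset.range (min n m + 1),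
    (n.descFactorial j : ℂ) * (-(Complex.I * ℏ) / 2) ^ j *
      (p : ℂ) ^ (n - j) * (q : ℂ) ^ (m - j)

/-- The recursion `g_{n,m} = p^n q^m − n (iℏ/2) g_{n−1,m−1}` for `n, m ≥ 1`. -/
theorem gW_recursion (ℏ q p : ℝ) (hℏ : 0 < ℏ) (n m : ℕ) (hn : 1 ≤ n) (hm : 1 ≤ m) :
    gW ℏ q p n m =
      (p : ℂ) ^ n * (q : ℂ) ^ m - (n : ℂ) * (Complex.I * ℏ / 2) * gW ℏ q p (n - 1) (m - 1) := by
  obtain ⟨n', rfl⟩ := Nat.exists_eq_add_of_le hn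
  obtain ⟨m', rfl⟩ := Nat.exists_eq_add_of_le hm
  simp only [gW, Nat.add_sub_cancel_left, Nat.succ_min_succ, Nat.add_sub_cancel,
    add_comm 1 n', add_comm 1 m']
  rw [Finset.sum_range_succ']
  simp only [Nat.descFactorial_zero, Nat.cast_one, pow_zero, Nat.sub_zero, one_mul, mul_one]
  rw [sub_eq_add_neg, add_comm ((p:ℂ)^(n'+1) * _), ← neg_mul, ← neg_mul, Finset.mul_sum]
  congr 1
  apply Finset.sum_congr rfl
  intro j hj
  simp only [Finset.mem_range] at hj
  have hj' : j ≤ min n' m' := Nat.lt_succ_iff.mp hj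
  have h1 : n' + 1 - (j + 1) = n' - j := by omega
  have h2 : m' + 1 - (j + 1) = m' - j := by omega
  rw [h1, h2, Nat.succ_descFactorial_succ]
  push_cast
  ring
end
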